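/- Let p, q > 1 and let α₁, α₂, β₁, β₂ be real numbers with -1 < α₁ < 0, -1 < β₂ < 0, α₂ > 0, β₁ > 0, satisfying (p-1-α₁)(q-1-β₂) - β₁ α₂ = 0 and β₁ = (q/p)(p-1-α₁). Then for all real numbers u > 0 and v > 0 one has u^{α₁+1} v^{β₁} + u^{α₂} v^{β₂+1} ≤ ((α₁+α₂+1)/p) · u^p + ((β₁+β₂+1)/q) · v^q. -/
import Mathlib


/-- Combined pointwise inequality in the homogeneous case: for `p, q > 1`,
`-1 < α₁ < 0`, `-1 < β₂ < 0`, `α₂, β₁ > 0`, with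
`(p-1-α₁)(q-1-β₂) - β₁ α₂ = 0` and `β₁ = (q/p)(p-1-α₁)`, one has for all
`u, v > 0`:
`u^(α₁+1) v^β₁ + u^α₂ v^(β₂+1) ≤ ((α₁+α₂+1)/p) u^p + ((β₁+β₂+1)/q) v^q`.
Powers are real powers (`Real.rpow`). -/
theorem combined_young_homogeneous
    (p q α₁ α₂ β₁ β₂ : ℝ) (hp : 1 < p) (hq : 1 < q)
    (hα₁ : -1 < α₁) (hα₁' : α₁ < 0) (hβ₂ : -1 < β₂) (hβ₂' : β₂ < 0)
    (hα₂ : 0 < α₂) (hβ₁ : 0 < β₁)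
    (hΘ : (p - 1 - α₁) * (q - 1 - β₂) - β₁ * α₂ = 0)
    (hβ₁eq : β₁ = (q / p) * (p - 1 - α₁)) :
    ∀ u v : ℝ, 0 < u → 0 < v →
      u ^ (α₁ + 1) * v ^ β₁ + u ^ α₂ * v ^ (β₂ + 1) ≤
        ((α₁ + α₂ + 1) / p) * u ^ p + ((β₁ + β₂ + 1) / q) * v ^ q := by
  intro u v hu hv
  have hp0 : (0:ℝ) < p := lt_trans one_pos hp
  have hq0 : (0:ℝ) < q := lt_trans one_pos hq
  have hpne : p ≠ 0 := hp0.ne'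
  have hqne : q ≠ 0 := hq0.ne'
  have hpA : 0 < p - 1 - α₁ := by linarith
  have hα₂eq : α₂ = (p / q) * (q - 1 - β₂) := by
    have h : (p - 1 - α₁) * (q - 1 - β₂) = (q / p) * (p - 1 - α₁) * α₂ := by
      rw [← hβ₁eq]; linarith
    field_simp at h ⊢
    nlinarith [h, hpA]
  have hup : (0:ℝ) < u ^ p := Real.rpow_pos_of_pos hu p
  have hvq : (0:ℝ) < v ^ q := Real.rpow_pos_of_pos hv q
  have key1 : u ^ (α₁ + 1) * v ^ β₁
      = (u ^ p) ^ ((α₁ + 1) / p) * (v ^ q) ^ ((p - 1 - α₁) / p) := by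
    rw [← Real.rpow_mul hu.le, ← Real.rpow_mul hv.le]
    congr 1
    · congr 1; field_simp
    · congr 1; rw [hβ₁eq]; field_simp
  have key2 : u ^ α₂ * v ^ (β₂ + 1)
      = (u ^ p) ^ (α₂ / p) * (v ^ q) ^ ((β₂ + 1) / q) := by
    rw [← Real.rpow_mul hu.le, ← Real.rpow_mul hv.le]
    congr 1
    · congr 1; field_simp
    · congr 1; field_simp
  have ha₁0 : 0 ≤ (α₁ + 1) / p := by
    have : 0 < α₁ + 1 := by linarith
    positivity
  have hb₁0 : 0 ≤ (p - 1 - α₁) / p := by positivity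
  have ha₂0 : 0 ≤ α₂ / p := by positivity
  have hb₂0 : 0 ≤ (β₂ + 1) / q := by
    have : 0 < β₂ + 1 := by linarith
    positivity
  have hsum1 : (α₁ + 1) / p + (p - 1 - α₁) / p = 1 := by field_simp; ring
  have hsum2 : α₂ / p + (β₂ + 1) / q = 1 := by
    rw [hα₂eq]; field_simp; ring
  have y1 := Real.geom_mean_le_arith_mean2_weighted ha₁0 hb₁0 hup.le hvq.le hsum1
  have y2 := Real.geom_mean_le_arith_mean2_weighted ha₂0 hb₂0 hup.le hvq.le hsum2
  rw [key1, key2]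
  have hcoef1 : (α₁ + 1) / p + α₂ / p = (α₁ + α₂ + 1) / p := by ring
  have hcoef2 : (p - 1 - α₁) / p + (β₂ + 1) / q = (β₁ + β₂ + 1) / q := by
    rw [hβ₁eq]; field_simp; ring
  calc (u ^ p) ^ ((α₁ + 1) / p) * (v ^ q) ^ ((p - 1 - α₁) / p)
        + (u ^ p) ^ (α₂ / p) * (v ^ q) ^ ((β₂ + 1) / q)
      ≤ ((α₁ + 1) / p * u ^ p + (p - 1 - α₁) / p * v ^ q)
        + (α₂ / p * u ^ p + (β₂ + 1) / q * v ^ q) := add_le_add y1 y2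
    _ = ((α₁ + 1) / p + α₂ / p) * u ^ p
        + ((p - 1 - α₁) / p + (β₂ + 1) / q) * v ^ q := by ring
    _ = ((α₁ + α₂ + 1) / p) * u ^ p + ((β₁ + β₂ + 1) / q) * v ^ q := by
        rw [hcoef1, hcoef2]
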